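/- Let M be a randomized algorithm, S, S' neighboring databases, and D a random variable (depending on S) taking values in a countable set P, with D' the analogous variable for S'. Suppose P partitions into 'weak' elements π with Pr_S[D=π] ≤ δ and 'strong' elements, such that: (a) Σ_{weak π} Pr_S[D=π] ≤ nδ; (b) for every strong π there is a set Π'_π ⊆ P with the sets {Π'_π} pairwise disjoint, Pr_S[D=π] ≤ e^{ε₁}·Pr_{S'}[D'∈Π'_π], and Pr[M(S)∈T | D=π] ≤ e^{ε₂}·Pr[M(S')∈T | D'∈Π'_π] + δ₂ for every event T. Then for every event T: Pr[M(S)∈T] ≤ e^{ε₁+ε₂}·Pr[M(S')∈T] + nδ + e^{ε₁}·δ₂. -/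

import Mathlib

open Function

/-- Auxiliary: summing `∑' π' ∈ Pi' π, u π'` over a set of indices with pairwise
disjoint `Pi' π` is at most `∑' u`, for nonnegative summable `u`. -/
lemma aux_disjoint_sum {P : Type*} (W : Set P) (Pi' : P → Set P)
    (hdisj : ∀ π₁ π₂ : P, π₁ ∈ W → π₂ ∈ W → π₁ ≠ π₂ → Disjoint (Pi' π₁) (Pi' π₂))
    (u : P → ℝ) (hu0 : ∀ x, 0 ≤ u x) (hu : Summable u) :
    Summable (fun π : W => ∑' π' : Pi' (π : P), u (π' : P)) ∧
      (∑' π : ↥W, ∑' π' : Pi' (π : P), u (π' : P)) ≤ ∑' x, u x := by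
  set ι : (Σ π : ↥W, Pi' (π : P)) → P := fun σ => (σ.2 : P) with hι_def
  have hι : Function.Injective ι := by
    rintro ⟨⟨π₁, h₁⟩, ⟨x, hx⟩⟩ ⟨⟨π₂, h₂⟩, ⟨y, hy⟩⟩ (h : x = y)
    subst h
    have hππ : π₁ = π₂ := by
      by_contra hne
      exact Set.disjoint_left.mp (hdisj π₁ π₂ h₁ h₂ hne) hx hy
    subst hππ
    rfl
  have hF : Summable (u ∘ ι) := hu.comp_injective hι
  have hsig : Summable (fun π : W => ∑' π' : Pi' (π : P), u (π' : P)) := hF.sigma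
  refine ⟨hsig, ?_⟩
  have htsum : (∑' σ : (Σ π : ↥W, Pi' (π : P)), u (ι σ))
      = ∑' π : ↥W, ∑' π' : Pi' (π : P), u (π' : P) := Summable.tsum_sigma hF
  rw [← htsum]
  exact Summable.tsum_le_tsum_of_inj ι hι (fun c _ => hu0 c) (fun _ => le_rfl) hF hu

/-- Hybrid/conditioning lemma underlying the TreeLog privacy proof.
`pS π = Pr_S[D = π]`, `cS π T = Pr[M(S) ∈ T ∣ D = π]`, and similarly for `S'`;
`cM' π T = Pr[M(S') ∈ T ∣ D' ∈ Pi' π]`. A path `π` is weak if `pS π ≤ δ`. -/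
theorem stmt15 {P Ω : Type*} [Countable P]
    (ε₁ ε₂ δ δ₂ n : ℝ) (hδ : 0 ≤ δ) (hδ₂ : 0 ≤ δ₂) (hn : 0 ≤ n)
    (pS pS' : P → ℝ) (cS cS' cM' : P → Set Ω → ℝ)
    (Pi' : P → Set P)
    (hpS0 : ∀ π, 0 ≤ pS π) (hpS'0 : ∀ π, 0 ≤ pS' π)
    (hsum : Summable pS) (hsum' : Summable pS')
    (hpS'1 : ∑' π, pS' π ≤ 1)
    (hc0 : ∀ π T, 0 ≤ cS π T) (hc1 : ∀ π T, cS π T ≤ 1)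
    (hc'0 : ∀ π T, 0 ≤ cS' π T) (hc'1 : ∀ π T, cS' π T ≤ 1)
    (hweak : ∑' π : {π : P // pS π ≤ δ}, pS (π : P) ≤ n * δ)
    (hdisj : ∀ π₁ π₂ : P, ¬ pS π₁ ≤ δ → ¬ pS π₂ ≤ δ → π₁ ≠ π₂ →
      Disjoint (Pi' π₁) (Pi' π₂))
    (hb1 : ∀ π : P, ¬ pS π ≤ δ →
      pS π ≤ Real.exp ε₁ * ∑' π' : Pi' π, pS' (π' : P))
    (hb2 : ∀ π : P, ¬ pS π ≤ δ → ∀ T : Set Ω,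
      cS π T ≤ Real.exp ε₂ * cM' π T + δ₂)
    (hcond : ∀ π : P, ¬ pS π ≤ δ → ∀ T : Set Ω,
      (∑' π' : Pi' π, pS' (π' : P)) * cM' π T
        = ∑' π' : Pi' π, pS' (π' : P) * cS' (π' : P) T) :
    ∀ T : Set Ω,
      (∑' π, pS π * cS π T) ≤
        Real.exp (ε₁ + ε₂) * (∑' π, pS' π * cS' π T) + n * δ + Real.exp ε₁ * δ₂ := by
  intro T
  set W : Set P := {π | pS π ≤ δ} with hWdef
  have hWc : ∀ π : P, π ∈ Wᶜ ↔ ¬ pS π ≤ δ := fun π => Iff.rfl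
  set g : P → ℝ := fun π' => pS' π' * cS' π' T with hgdef
  have hg0 : ∀ π', 0 ≤ g π' := fun π' => mul_nonneg (hpS'0 _) (hc'0 _ _)
  have hgsum : Summable g :=
    Summable.of_nonneg_of_le hg0 (fun π' => mul_le_of_le_one_right (hpS'0 _) (hc'1 _ _)) hsum'
  set f : P → ℝ := fun π => pS π * cS π T with hfdef
  have hf0 : ∀ π, 0 ≤ f π := fun π => mul_nonneg (hpS0 _) (hc0 _ _)
  have hfle : ∀ π, f π ≤ pS π := fun π => mul_le_of_le_one_right (hpS0 _) (hc1 _ _)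
  have hfsum : Summable f := Summable.of_nonneg_of_le hf0 hfle hsum
  have hdisj' : ∀ π₁ π₂ : P, π₁ ∈ Wᶜ → π₂ ∈ Wᶜ → π₁ ≠ π₂ → Disjoint (Pi' π₁) (Pi' π₂) :=
    fun π₁ π₂ h₁ h₂ => hdisj π₁ π₂ h₁ h₂
  obtain ⟨hhsum, hhle⟩ := aux_disjoint_sum Wᶜ Pi' hdisj' g hg0 hgsum
  obtain ⟨hqsum, hqle⟩ := aux_disjoint_sum Wᶜ Pi' hdisj' pS' hpS'0 hsum'
  -- weak part
  have hweakpart : ∑' π : ↥W, f (π : P) ≤ n * δ :=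
    le_trans (Summable.tsum_le_tsum (fun π => hfle π) (hfsum.subtype _) (hsum.subtype _)) hweak
  -- strong pointwise bound
  have key : ∀ π : ↥(Wᶜ), f (π : P) ≤
      Real.exp (ε₁ + ε₂) * (∑' π' : Pi' (π : P), g (π' : P))
        + Real.exp ε₁ * δ₂ * (∑' π' : Pi' (π : P), pS' (π' : P)) := by
    rintro ⟨π, hπ⟩
    have hπ' : ¬ pS π ≤ δ := hπ
    set Sπ : ℝ := ∑' π' : Pi' π, pS' (π' : P) with hSdef
    have hS0 : 0 ≤ Sπ := tsum_nonneg fun π' => hpS'0 _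
    have hpSpos : 0 < pS π := lt_of_le_of_lt hδ (not_le.mp hπ')
    have hSpos : 0 < Sπ := by
      have h1 := hb1 π hπ'
      nlinarith [Real.exp_pos ε₁]
    have hcM0 : 0 ≤ cM' π T := by
      have hc := hcond π hπ' T
      have hnn : 0 ≤ Sπ * cM' π T := by
        rw [hc]; exact tsum_nonneg fun π' => hg0 _
      exact (mul_nonneg_iff_of_pos_left hSpos).mp hnn
    have step1 : f π ≤ pS π * (Real.exp ε₂ * cM' π T + δ₂) :=
      mul_le_mul_of_nonneg_left (hb2 π hπ' T) (hpS0 π)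
    have step2 : pS π * (Real.exp ε₂ * cM' π T + δ₂)
        ≤ (Real.exp ε₁ * Sπ) * (Real.exp ε₂ * cM' π T + δ₂) := by
      apply mul_le_mul_of_nonneg_right (hb1 π hπ')
      positivity
    have step3 : (Real.exp ε₁ * Sπ) * (Real.exp ε₂ * cM' π T + δ₂)
        = Real.exp (ε₁ + ε₂) * (Sπ * cM' π T) + Real.exp ε₁ * δ₂ * Sπ := by
      rw [Real.exp_add]; ring
    have step4 : Sπ * cM' π T = ∑' π' : Pi' π, g (π' : P) := hcond π hπ' T
    calc f π ≤ (Real.exp ε₁ * Sπ) * (Real.exp ε₂ * cM' π T + δ₂) := step1.trans step2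
      _ = Real.exp (ε₁ + ε₂) * (∑' π' : Pi' π, g (π' : P)) + Real.exp ε₁ * δ₂ * Sπ := by
          rw [step3, step4]
  -- strong part summed
  have hRHSsum : Summable (fun π : ↥(Wᶜ) =>
      Real.exp (ε₁ + ε₂) * (∑' π' : Pi' (π : P), g (π' : P))
        + Real.exp ε₁ * δ₂ * (∑' π' : Pi' (π : P), pS' (π' : P))) :=
    (hhsum.mul_left _).add (hqsum.mul_left _)
  have hstrongpart : ∑' π : ↥(Wᶜ), f (π : P)
      ≤ Real.exp (ε₁ + ε₂) * (∑' π : ↥(Wᶜ), ∑' π' : Pi' (π : P), g (π' : P))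
        + Real.exp ε₁ * δ₂ * (∑' π : ↥(Wᶜ), ∑' π' : Pi' (π : P), pS' (π' : P)) := by
    calc ∑' π : ↥(Wᶜ), f (π : P)
        ≤ ∑' π : ↥(Wᶜ), (Real.exp (ε₁ + ε₂) * (∑' π' : Pi' (π : P), g (π' : P))
            + Real.exp ε₁ * δ₂ * (∑' π' : Pi' (π : P), pS' (π' : P))) :=
          Summable.tsum_le_tsum key (hfsum.subtype _) hRHSsum
      _ = Real.exp (ε₁ + ε₂) * (∑' π : ↥(Wᶜ), ∑' π' : Pi' (π : P), g (π' : P))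
            + Real.exp ε₁ * δ₂ * (∑' π : ↥(Wᶜ), ∑' π' : Pi' (π : P), pS' (π' : P)) := by
          rw [Summable.tsum_add (hhsum.mul_left _) (hqsum.mul_left _), tsum_mul_left, tsum_mul_left]
  have hsplit : ∑' π : ↥W, f (π : P) + ∑' π : ↥(Wᶜ), f (π : P) = ∑' π, f π :=
    Summable.tsum_subtype_add_tsum_subtype_compl hfsum W
  have hgnn : 0 ≤ ∑' π, g π := tsum_nonneg hg0
  have hq1 : ∑' π : ↥(Wᶜ), ∑' π' : Pi' (π : P), pS' (π' : P) ≤ 1 := hqle.trans hpS'1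
  have hexp12 : (0:ℝ) < Real.exp (ε₁ + ε₂) := Real.exp_pos _
  have hexp1 : (0:ℝ) < Real.exp ε₁ := Real.exp_pos _
  have h1 : Real.exp (ε₁ + ε₂) * (∑' π : ↥(Wᶜ), ∑' π' : Pi' (π : P), g (π' : P))
      ≤ Real.exp (ε₁ + ε₂) * ∑' π, g π :=
    mul_le_mul_of_nonneg_left hhle hexp12.le
  have h2 : Real.exp ε₁ * δ₂ * (∑' π : ↥(Wᶜ), ∑' π' : Pi' (π : P), pS' (π' : P))
      ≤ Real.exp ε₁ * δ₂ * 1 :=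
    mul_le_mul_of_nonneg_left hq1 (by positivity)
  have : ∑' π, f π ≤ n * δ + (Real.exp (ε₁ + ε₂) * ∑' π, g π + Real.exp ε₁ * δ₂) := by
    rw [← hsplit]
    have := hstrongpart.trans (by linarith : Real.exp (ε₁ + ε₂) *
        (∑' π : ↥(Wᶜ), ∑' π' : Pi' (π : P), g (π' : P))
        + Real.exp ε₁ * δ₂ * (∑' π : ↥(Wᶜ), ∑' π' : Pi' (π : P), pS' (π' : P))
        ≤ Real.exp (ε₁ + ε₂) * ∑' π, g π + Real.exp ε₁ * δ₂)
    linarith [hweakpart]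
  linarith [this]
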